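/- Let P be a finite poset which is the union of two disjoint chains C : x₀ < x₁ < ⋯ < x_s and C' : y₀ < y₁ < ⋯ < y_t with s ≥ 1 and t ≥ 1 (order relations between elements of C and C' are allowed), and suppose that x₀ and y₀ are incomparable and that x_s and y_t are incomparable. Then the comparability graph of the distributive lattice J(P) of all lower sets (poset ideals) of P, ordered by inclusion, is not chordal: the four lower sets a = P \ {x_s}, b = P \ {y_t}, a' = {x₀}, b' = {y₀} form an induced 4-cycle. -/

import Mathlib

/-- The comparability graph of a poset: two distinct elements are adjacent iff they are
comparable. -/
def compGraph (Q : Type*) [PartialOrder Q] : SimpleGraph Q where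
  Adj x y := x ≠ y ∧ (x ≤ y ∨ y ≤ x)
  symm := ⟨fun _ _ h => ⟨h.1.symm, h.2.symm⟩⟩
  loopless := ⟨fun _ h => h.1 rfl⟩

/-- `f` is an induced cycle of length `n` in `G`, with vertices indexed by `ZMod n`:
`f` is injective and two vertices of the cycle are adjacent iff they are consecutive. -/
def IsInducedCycle {V : Type*} (G : SimpleGraph V) (n : ℕ) (f : ZMod n → V) : Prop :=
  Function.Injective f ∧ ∀ i j : ZMod n, G.Adj (f i) (f j) ↔ (j = i + 1 ∨ i = j + 1)

/-- A graph is chordal if it has no induced cycle of length at least 4. -/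
def SimpleGraph.Chordal {V : Type*} (G : SimpleGraph V) : Prop :=
  ¬ ∃ (n : ℕ) (f : ZMod n → V), 4 ≤ n ∧ IsInducedCycle G n f

lemma induced4 {V : Type*} (G : SimpleGraph V) (v : ZMod 4 → V)
    (h01 : G.Adj (v 0) (v 1)) (h12 : G.Adj (v 1) (v 2))
    (h23 : G.Adj (v 2) (v 3)) (h30 : G.Adj (v 3) (v 0))
    (h02 : ¬ G.Adj (v 0) (v 2)) (h13 : ¬ G.Adj (v 1) (v 3))
    (n02 : v 0 ≠ v 2) (n13 : v 1 ≠ v 3) :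
    IsInducedCycle G 4 v := by
  have h10 := h01.symm
  have h21 := h12.symm
  have h32 := h23.symm
  have h03 := h30.symm
  have h20 : ¬ G.Adj (v 2) (v 0) := fun h => h02 h.symm
  have h31 : ¬ G.Adj (v 3) (v 1) := fun h => h13 h.symm
  have hcases : ∀ k : ZMod 4, k = 0 ∨ k = 1 ∨ k = 2 ∨ k = 3 := by decide
  constructor
  · intro i j h
    rcases hcases i with rfl|rfl|rfl|rfl <;> rcases hcases j with rfl|rfl|rfl|rfl <;>
      first
      | rfl
      | (exact absurd h h01.ne) | (exact absurd h h10.ne)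
      | (exact absurd h h12.ne) | (exact absurd h h21.ne)
      | (exact absurd h h23.ne) | (exact absurd h h32.ne)
      | (exact absurd h h30.ne) | (exact absurd h h03.ne)
      | (exact absurd h n02) | (exact absurd h n02.symm)
      | (exact absurd h n13) | (exact absurd h n13.symm)
  · intro i j
    rcases hcases i with rfl|rfl|rfl|rfl <;> rcases hcases j with rfl|rfl|rfl|rfl <;>
      simp_all (config := { decide := true }) [G.irrefl]

/-- Let `P` be a finite poset which is the union of two disjoint chains
`x₀ < x₁ < ⋯ < x_s` and `y₀ < y₁ < ⋯ < y_t` with `s, t ≥ 1`, such that `x₀, y₀` are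
incomparable and `x_s, y_t` are incomparable.  Then the comparability graph of the
distributive lattice `J(P)` of lower sets of `P`, ordered by inclusion, is not chordal:
the four lower sets `a = P \ {x_s}`, `b = P \ {y_t}`, `a' = {x₀}`, `b' = {y₀}` form an
induced 4-cycle. -/
theorem statement11 {P : Type*} [PartialOrder P] [Fintype P]
    (s t : ℕ) (hs : 1 ≤ s) (ht : 1 ≤ t)
    (x : Fin (s + 1) → P) (y : Fin (t + 1) → P)
    (hx : StrictMono x) (hy : StrictMono y)
    (hdisj : ∀ i j, x i ≠ y j)
    (hcover : ∀ p : P, (∃ i, p = x i) ∨ (∃ j, p = y j))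
    (hbot : ¬ x 0 ≤ y 0 ∧ ¬ y 0 ≤ x 0)
    (htop : ¬ x (Fin.last s) ≤ y (Fin.last t) ∧ ¬ y (Fin.last t) ≤ x (Fin.last s)) :
    ∃ (ha : IsLowerSet (Set.univ \ {x (Fin.last s)}))
      (hb : IsLowerSet (Set.univ \ {y (Fin.last t)}))
      (ha' : IsLowerSet ({x 0} : Set P)) (hb' : IsLowerSet ({y 0} : Set P)),
      IsInducedCycle (compGraph (LowerSet P)) 4
        (fun i : ZMod 4 =>
          if i = 0 then (⟨{x 0}, ha'⟩ : LowerSet P)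
          else if i = 1 then ⟨Set.univ \ {x (Fin.last s)}, ha⟩
          else if i = 2 then ⟨{y 0}, hb'⟩
          else ⟨Set.univ \ {y (Fin.last t)}, hb⟩) ∧
      ¬ (compGraph (LowerSet P)).Chordal := by
  have ha : IsLowerSet (Set.univ \ {x (Fin.last s)}) := by
    intro a b hba hma
    refine ⟨trivial, fun hb => ?_⟩
    simp only [Set.mem_diff, Set.mem_univ, Set.mem_singleton_iff, true_and] at hma hb
    subst hb
    rcases hcover a with ⟨i, rfl⟩ | ⟨j, rfl⟩
    · exact hma (congrArg x (le_antisymm (Fin.le_last i) (hx.le_iff_le.mp hba)))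
    · exact htop.1 (hba.trans (hy.monotone (Fin.le_last j)))
  have hb : IsLowerSet (Set.univ \ {y (Fin.last t)}) := by
    intro a b hba hma
    refine ⟨trivial, fun hbm => ?_⟩
    simp only [Set.mem_diff, Set.mem_univ, Set.mem_singleton_iff, true_and] at hma hbm
    subst hbm
    rcases hcover a with ⟨i, rfl⟩ | ⟨j, rfl⟩
    · exact htop.2 (hba.trans (hx.monotone (Fin.le_last i)))
    · exact hma (congrArg y (le_antisymm (Fin.le_last j) (hy.le_iff_le.mp hba)))
  have ha' : IsLowerSet ({x 0} : Set P) := by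
    intro a b hba hma
    simp only [Set.mem_singleton_iff] at *
    subst hma
    rcases hcover b with ⟨i, rfl⟩ | ⟨j, rfl⟩
    · exact congrArg x (le_antisymm (hx.le_iff_le.mp hba) (Fin.zero_le i))
    · exact absurd ((hy.monotone (Fin.zero_le j)).trans hba) hbot.2
  have hb' : IsLowerSet ({y 0} : Set P) := by
    intro a b hba hma
    simp only [Set.mem_singleton_iff] at *
    subst hma
    rcases hcover b with ⟨i, rfl⟩ | ⟨j, rfl⟩
    · exact absurd ((hx.monotone (Fin.zero_le i)).trans hba) hbot.1
    · exact congrArg y (le_antisymm (hy.le_iff_le.mp hba) (Fin.zero_le j))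
  refine ⟨ha, hb, ha', hb', ?_⟩
  -- notation
  set A' : LowerSet P := ⟨{x 0}, ha'⟩ with hA'
  set A : LowerSet P := ⟨Set.univ \ {x (Fin.last s)}, ha⟩ with hA
  set B' : LowerSet P := ⟨{y 0}, hb'⟩ with hB'
  set B : LowerSet P := ⟨Set.univ \ {y (Fin.last t)}, hb⟩ with hB
  -- basic distinctness of elements
  have h0s : (0 : Fin (s + 1)) < Fin.last s := by
    rw [Fin.lt_def]; simpa using Nat.lt_of_lt_of_le Nat.zero_lt_one hs
  have h0t : (0 : Fin (t + 1)) < Fin.last t := by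
    rw [Fin.lt_def]; simpa using Nat.lt_of_lt_of_le Nat.zero_lt_one ht
  have hx0s : x 0 ≠ x (Fin.last s) := (hx h0s).ne
  have hy0t : y 0 ≠ y (Fin.last t) := (hy h0t).ne
  have hx0y0 : x 0 ≠ y 0 := hdisj 0 0
  have hx0yt : x 0 ≠ y (Fin.last t) := hdisj 0 (Fin.last t)
  have hy0xs : y 0 ≠ x (Fin.last s) := (hdisj (Fin.last s) 0).symm
  have hxsyt : x (Fin.last s) ≠ y (Fin.last t) := hdisj (Fin.last s) (Fin.last t)
  -- adjacencies via set inclusions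
  have le_A'A : A' ≤ A := by
    intro p hp
    replace hp : p = x 0 := hp
    subst hp
    exact ⟨trivial, hx0s⟩
  have le_B'A : B' ≤ A := by
    intro p hp
    replace hp : p = y 0 := hp
    subst hp
    exact ⟨trivial, hy0xs⟩
  have le_A'B : A' ≤ B := by
    intro p hp
    replace hp : p = x 0 := hp
    subst hp
    exact ⟨trivial, hx0yt⟩
  have le_B'B : B' ≤ B := by
    intro p hp
    replace hp : p = y 0 := hp
    subst hp
    exact ⟨trivial, hy0t⟩
  have neA'A : A' ≠ A := by
    intro h
    have : y 0 ∈ (A' : Set P) := by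
      rw [h]; exact ⟨trivial, hy0xs⟩
    exact hx0y0 (by simpa using this.symm)
  have neB'A : B' ≠ A := by
    intro h
    have : x 0 ∈ (B' : Set P) := by
      rw [h]; exact ⟨trivial, hx0s⟩
    exact hx0y0 this
  have neA'B : A' ≠ B := by
    intro h
    have : y 0 ∈ (A' : Set P) := by
      rw [h]; exact ⟨trivial, hy0t⟩
    exact hx0y0 (by simpa using this.symm)
  have neB'B : B' ≠ B := by
    intro h
    have : x 0 ∈ (B' : Set P) := by
      rw [h]; exact ⟨trivial, hx0yt⟩
    exact hx0y0 this
  have neA'B' : A' ≠ B' := by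
    intro h
    have : x 0 ∈ (B' : Set P) := by rw [← h]; rfl
    exact hx0y0 this
  have neAB : A ≠ B := by
    intro h
    have : y (Fin.last t) ∈ (B : Set P) := by
      rw [← h]; exact ⟨trivial, fun hc => hxsyt hc.symm⟩
    exact this.2 rfl
  -- non-adjacency
  have nleA'B' : ¬ A' ≤ B' := fun h => hx0y0 (by have := h rfl; exact this)
  have nleB'A' : ¬ B' ≤ A' := fun h => hx0y0 (by simpa using (h rfl).symm)
  have nleAB : ¬ A ≤ B := by
    intro h
    have : y (Fin.last t) ∈ (B : Set P) := h ⟨trivial, fun hc => hxsyt hc.symm⟩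
    exact this.2 rfl
  have nleBA : ¬ B ≤ A := by
    intro h
    have : x (Fin.last s) ∈ (A : Set P) := h ⟨trivial, hxsyt⟩
    exact this.2 rfl
  -- set up the cycle
  have hcyc : IsInducedCycle (compGraph (LowerSet P)) 4
      (fun i : ZMod 4 => if i = 0 then A' else if i = 1 then A
        else if i = 2 then B' else B) := by
    have z10 : (1 : ZMod 4) ≠ 0 := by decide
    have z20 : (2 : ZMod 4) ≠ 0 := by decide
    have z21 : (2 : ZMod 4) ≠ 1 := by decide
    have z30 : (3 : ZMod 4) ≠ 0 := by decide
    have z31 : (3 : ZMod 4) ≠ 1 := by decide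
    have z32 : (3 : ZMod 4) ≠ 2 := by decide
    apply induced4 <;> simp only [if_pos, if_neg, reduceIte, z10, z20, z21, z30, z31, z32, if_false]
    · exact ⟨neA'A, Or.inl le_A'A⟩
    · exact ⟨(neB'A).symm, Or.inr le_B'A⟩
    · exact ⟨neB'B, Or.inl le_B'B⟩
    · exact ⟨(neA'B).symm, Or.inr le_A'B⟩
    · rintro ⟨hne, h | h⟩
      · exact nleA'B' h
      · exact nleB'A' h
    · rintro ⟨hne, h | h⟩
      · exact nleAB h
      · exact nleBA h
    · exact neA'B'
    · exact neAB
  exact ⟨hcyc, fun h => h ⟨4, _, le_refl 4, hcyc⟩⟩
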